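/- For the single-sink mechanism (which picks an alternative maximizing the sum of valuations of all agents except a fixed sink agent i*), the supremum over all valuation profiles with values in (-M/2, M/2) of the welfare loss equals exactly M; i.e., the bound M is tight but not attained. -/

import Mathlib

open Finset

private lemma strict_lt {n : ℕ} {A : Type} [Fintype A] [Nonempty A]
    (M : ℝ) (istar : Fin n)
    (v : Fin n → A → ℝ) (fv : A)
    (hIoo : ∀ i a, v i a ∈ Set.Ioo (-(M/2)) (M/2))
    (hmax : ∀ a : A, ∑ j ∈ Finset.univ.erase istar, v j a ≤
            ∑ j ∈ Finset.univ.erase istar, v j fv) :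
    (Finset.univ.sup' Finset.univ_nonempty (fun a => ∑ i, v i a))
      - ∑ i, v i fv < M := by
  obtain ⟨a, -, ha⟩ := Finset.exists_mem_eq_sup' (Finset.univ_nonempty (α := A))
    (fun a => ∑ i, v i a)
  rw [ha]
  have split : ∀ b : A, ∑ i, v i b = (∑ j ∈ Finset.univ.erase istar, v j b) + v istar b := by
    intro b
    rw [Finset.sum_erase_add Finset.univ _ (Finset.mem_univ istar)]
  rw [split a, split fv]
  have h1 := hmax a
  have h2 := (hIoo istar a).2
  have h3 := (hIoo istar fv).1
  linarith

/-- the supremum of the welfare loss of the single-sink mechanism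
over all valuation profiles valued in `(-M/2, M/2)` is exactly `M`,
and `M` is not attained. -/
theorem stmt_1 {n : ℕ} (hn : 2 ≤ n) {A : Type} [Fintype A] [Nonempty A]
    (hA : 2 ≤ Fintype.card A) (M : ℝ) (hM : 0 < M) (istar : Fin n) :
    IsLUB { L : ℝ | ∃ (v : Fin n → A → ℝ) (fv : A),
        (∀ i a, v i a ∈ Set.Ioo (-(M/2)) (M/2)) ∧
        (∀ a : A, ∑ j ∈ Finset.univ.erase istar, v j a ≤
            ∑ j ∈ Finset.univ.erase istar, v j fv) ∧
        L = (Finset.univ.sup' Finset.univ_nonempty (fun a => ∑ i, v i a))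
              - ∑ i, v i fv } M
    ∧ M ∉ { L : ℝ | ∃ (v : Fin n → A → ℝ) (fv : A),
        (∀ i a, v i a ∈ Set.Ioo (-(M/2)) (M/2)) ∧
        (∀ a : A, ∑ j ∈ Finset.univ.erase istar, v j a ≤
            ∑ j ∈ Finset.univ.erase istar, v j fv) ∧
        L = (Finset.univ.sup' Finset.univ_nonempty (fun a => ∑ i, v i a))
              - ∑ i, v i fv } := by
  set S := { L : ℝ | ∃ (v : Fin n → A → ℝ) (fv : A),
        (∀ i a, v i a ∈ Set.Ioo (-(M/2)) (M/2)) ∧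
        (∀ a : A, ∑ j ∈ Finset.univ.erase istar, v j a ≤
            ∑ j ∈ Finset.univ.erase istar, v j fv) ∧
        L = (Finset.univ.sup' Finset.univ_nonempty (fun a => ∑ i, v i a))
              - ∑ i, v i fv } with hS
  -- every element of S is < M
  have hlt : ∀ L ∈ S, L < M := by
    rintro L ⟨v, fv, hIoo, hmax, rfl⟩
    exact strict_lt M istar v fv hIoo hmax
  -- for every 0 < δ ≤ M/2, M - 2δ ∈ S
  have hmem : ∀ δ : ℝ, 0 < δ → δ ≤ M / 2 → M - 2 * δ ∈ S := by
    intro δ hδ hδ2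
    classical
    obtain ⟨a0, a1, hne⟩ := Fintype.exists_pair_of_one_lt_card (by omega : 1 < Fintype.card A)
    refine ⟨fun i a => if i = istar then (if a = a0 then M/2 - δ else -(M/2 - δ)) else 0,
      a1, ?_, ?_, ?_⟩
    · intro i a
      dsimp only
      constructor
      · split_ifs <;> simp <;> linarith
      · split_ifs <;> simp <;> linarith
    · intro a
      have hz : ∀ a : A, ∑ j ∈ Finset.univ.erase istar,
          (if j = istar then (if a = a0 then M/2 - δ else -(M/2 - δ)) else 0) = 0 := by
        intro a
        apply Finset.sum_eq_zero
        intro j hj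
        rw [if_neg (Finset.ne_of_mem_erase hj)]
      rw [hz, hz]
    · have hsum : ∀ a : A, ∑ i, (if i = istar then
          (if a = a0 then M/2 - δ else -(M/2 - δ)) else 0)
          = (if a = a0 then M/2 - δ else -(M/2 - δ)) := by
        intro a
        rw [Finset.sum_ite_eq' Finset.univ istar]
        simp
      have hsup : Finset.univ.sup' Finset.univ_nonempty
          (fun a => ∑ i, (if i = istar then (if a = a0 then M/2 - δ else -(M/2 - δ)) else 0))
          = M/2 - δ := by
        apply le_antisymm
        · apply Finset.sup'_le
          intro a _
          rw [hsum a]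
          split_ifs <;> linarith
        · have := Finset.le_sup' (f := fun a => ∑ i, (if i = istar then
            (if a = a0 then M/2 - δ else -(M/2 - δ)) else 0)) (Finset.mem_univ a0)
          rwa [hsum a0, if_pos rfl] at this
      rw [hsup, hsum a1, if_neg (Ne.symm hne)]
      ring
  constructor
  · constructor
    · intro L hL
      exact (hlt L hL).le
    · intro b hb
      by_contra hbM
      push_neg at hbM
      set δ := min ((M - b) / 4) (M / 4) with hδdef
      have hδ : 0 < δ := lt_min (by linarith) (by linarith)
      have hδ2 : δ ≤ M / 2 := le_trans (min_le_right _ _) (by linarith)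
      have h := hb (hmem δ hδ hδ2)
      have : δ ≤ (M - b) / 4 := min_le_left _ _
      linarith
  · intro hMmem
    exact absurd (hlt M hMmem) (lt_irrefl M)
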